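/- Let Λ be a finite-dimensional selfinjective algebra, Q a finite acyclic quiver, M a ΛQ-module, and α : v → w an arrow of Q. Then the ΛQ-module N = Mono_α(M), constructed as the middle term of a componentwise split short exact sequence 0 → P_w(E(M_v)) → N → M → 0 using an injective envelope e : M_v → E(M_v), satisfies: N_α is a monomorphism and the sum Im N_α + Σ_{t(β)=w, β≠α} Im N_β is a direct sum. -/

import Mathlib

open Function LinearMap

/-- A representation of the quiver with vertex set `V` and arrow family `E`
over the ring `Λ`: a `Λ`-module at every vertex and a linear map along every arrow. -/
structure QRep (Λ : Type) [Ring Λ] {V : Type} (E : V → V → Type) : Type 1 where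
  obj : V → Type
  [acg : ∀ i, AddCommGroup (obj i)]
  [mod : ∀ i, Module Λ (obj i)]
  map : ∀ {i j : V}, E i j → (obj i →ₗ[Λ] obj j)

attribute [instance] QRep.acg QRep.mod

namespace QRep

variable {Λ : Type} [Ring Λ] {V : Type} {E : V → V → Type}

/-- Morphisms of representations. -/
@[ext]
structure Hom (X Y : QRep Λ E) where
  app : ∀ i, X.obj i →ₗ[Λ] Y.obj i
  comm : ∀ {i j : V} (a : E i j), (Y.map a).comp (app i) = (app j).comp (X.map a)

def Hom.id (X : QRep Λ E) : Hom X X :=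
  ⟨fun _ => LinearMap.id, fun _ => by ext; rfl⟩

def Hom.comp {X Y Z : QRep Λ E} (g : Hom Y Z) (f : Hom X Y) : Hom X Z :=
  ⟨fun i => (g.app i).comp (f.app i), fun {i j} a => by
    ext x
    have h1 := LinearMap.congr_fun (f.comm a) x
    have h2 := LinearMap.congr_fun (g.comm a) (f.app i x)
    simp only [LinearMap.comp_apply] at h1 h2 ⊢
    rw [h2, h1]⟩

def Hom.sub {X Y : QRep Λ E} (f g : Hom X Y) : Hom X Y :=
  ⟨fun i => f.app i - g.app i, fun {i j} a => by
    ext x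
    have h1 := LinearMap.congr_fun (f.comm a) x
    have h2 := LinearMap.congr_fun (g.comm a) x
    simp only [LinearMap.comp_apply, LinearMap.sub_apply, map_sub] at h1 h2 ⊢
    rw [h1, h2]⟩

/-- Two representations are isomorphic. -/
def Iso (X Y : QRep Λ E) : Prop :=
  ∃ f : Hom X Y, ∀ i, Function.Bijective (f.app i)

/-- The assembled map `⊕_{a : j → i} X_j → X_i` at a vertex `i`. -/
noncomputable def uMap (X : QRep Λ E) (i : V) :
    (DirectSum (Σ j : V, E j i) (fun a => X.obj a.1)) →ₗ[Λ] X.obj i := by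
  classical exact DirectSum.toModule Λ _ _ (fun a => X.map a.2)

/-- A representation is separated monic if at every vertex the assembled map
from the direct sum of the incoming branches is injective. -/
def SeparatedMonic (X : QRep Λ E) : Prop :=
  ∀ i : V, Function.Injective (X.uMap i)

/-- Paths in the quiver given by the arrow family `E`. -/
def Path (E : V → V → Type) (i j : V) : Type := @Quiver.Path V ⟨E⟩ i j

/-- The quiver is acyclic: no nontrivial oriented cycles. -/
def Acyclic (E : V → V → Type) : Prop :=
  ∀ i : V, ∀ p : Path E i i, p = @Quiver.Path.nil V ⟨E⟩ i

/-- The representation `P_n(A) = A ⊗ P(n)`: at vertex `i` a copy of `A` for every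
path from `n` to `i`. -/
noncomputable def Pn (Λ : Type) [Ring Λ] (E : V → V → Type) (n : V) (A : Type)
    [AddCommGroup A] [Module Λ A] : QRep Λ E where
  obj i := Path E n i →₀ A
  map {i j} a := Finsupp.lmapDomain A Λ (fun p => @Quiver.Path.cons V ⟨E⟩ n i j p a)

/-- Projectivity of a representation, via the lifting property against
componentwise surjections of representations. -/
def Projective (P : QRep Λ E) : Prop :=
  ∀ (X Y : QRep Λ E) (g : Hom X Y), (∀ i, Function.Surjective (g.app i)) →
    ∀ f : Hom P Y, ∃ f' : Hom P X, g.comp f' = f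

/-- A module has no nonzero projective direct summand. -/
def NoProjSummand (Λ : Type) [Ring Λ] (M : Type) [AddCommGroup M] [Module Λ M] : Prop :=
  ∀ (P C : Type) [AddCommGroup P] [Module Λ P] [AddCommGroup C] [Module Λ C],
    Module.Projective Λ P → Nonempty (M ≃ₗ[Λ] P × C) → Subsingleton P

/-- A module has no nonzero injective direct summand. -/
def NoInjSummand (Λ : Type) [Ring Λ] (M : Type) [AddCommGroup M] [Module Λ M] : Prop :=
  ∀ (P C : Type) [AddCommGroup P] [Module Λ P] [AddCommGroup C] [Module Λ C],
    Module.Injective Λ P → Nonempty (M ≃ₗ[Λ] P × C) → Subsingleton P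

/-- A linear map factors through an injective module. -/
def FactorsThroughInjective (Λ : Type) [Ring Λ] {A B : Type}
    [AddCommGroup A] [Module Λ A] [AddCommGroup B] [Module Λ B] (f : A →ₗ[Λ] B) : Prop :=
  ∃ (J : Type) (_ : AddCommGroup J) (_ : Module Λ J), Module.Injective Λ J ∧
    ∃ (g : A →ₗ[Λ] J) (h : J →ₗ[Λ] B), f = h.comp g

/-- A morphism of representations factors through a projective representation. -/
def FactorsThroughProjective {X Y : QRep Λ E} (f : Hom X Y) : Prop :=
  ∃ (P : QRep Λ E), Projective P ∧ SeparatedMonic P ∧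
    ∃ (u : Hom X P) (v : Hom P Y), f = v.comp u

/-- Stable isomorphism: isomorphism in the stable category of Gorenstein-projective
representations modulo projectives. -/
def StIso (X Y : QRep Λ E) : Prop :=
  ∃ (f : Hom X Y) (g : Hom Y X),
    FactorsThroughProjective ((g.comp f).sub (Hom.id X)) ∧
    FactorsThroughProjective ((f.comp g).sub (Hom.id Y))

/-- `e : M →ₗ J` is an injective envelope: `J` is injective, `e` is injective and
its image is essential in `J`. -/
def IsInjEnvelope {M J : Type} [AddCommGroup M] [Module Λ M] [AddCommGroup J]
    [Module Λ J] (e : M →ₗ[Λ] J) : Prop :=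
  Module.Injective Λ J ∧ Function.Injective e ∧
    ∀ W : Submodule Λ J, Disjoint W (LinearMap.range e) → W = ⊥

end QRep
section MonoACons

variable {Λ : Type} [Ring Λ] {V : Type} {E : V → V → Type}

open QRep

namespace QRep

open Classical in
/-- The map `E_β` in the `Mono_α` construction: it is `single nil ∘ e` when `β = α`
and zero otherwise. -/
noncomputable def EMap (M : QRep Λ E) {v w : V} (α : E v w) {J : Type} [AddCommGroup J]
    [Module Λ J] (e : M.obj v →ₗ[Λ] J) {i j : V} (β : E i j) :
    M.obj i →ₗ[Λ] (Path E w j →₀ J) :=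
  if h : (⟨i, ⟨j, β⟩⟩ : Σ a : V, Σ b : V, E a b) = ⟨v, ⟨w, α⟩⟩ then by
    obtain ⟨h1, h2⟩ := Sigma.mk.inj_iff.mp h
    subst h1
    obtain ⟨h3, _⟩ := Sigma.mk.inj_iff.mp (eq_of_heq h2)
    subst h3
    exact (Finsupp.lsingle (R := Λ) (M := J) (@Quiver.Path.nil V ⟨E⟩ _)).comp e
  else 0

/-- The construction `Mono_α(M)`: the middle term of the componentwise split short
exact sequence `0 → P_w(J) → Mono_α(M) → M → 0` twisted by `e` at the arrow `α`. -/
noncomputable def MonoA (M : QRep Λ E) {v w : V} (α : E v w) {J : Type} [AddCommGroup J]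
    [Module Λ J] (e : M.obj v →ₗ[Λ] J) : QRep Λ E where
  obj i := M.obj i × (Path E w i →₀ J)
  map {i j} β := LinearMap.prod
    ((M.map β).comp (LinearMap.fst Λ _ _))
    ((Finsupp.lmapDomain J Λ (fun p => @Quiver.Path.cons V ⟨E⟩ w i j p β)).comp
        (LinearMap.snd Λ _ _)
      + (EMap M α e β).comp (LinearMap.fst Λ _ _))

/-- The canonical projection `Mono_α(M) → M`. -/
noncomputable def MonoAProj (M : QRep Λ E) {v w : V} (α : E v w) {J : Type} [AddCommGroup J]
    [Module Λ J] (e : M.obj v →ₗ[Λ] J) : Hom (MonoA M α e) M :=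
  ⟨fun _ => LinearMap.fst Λ _ _, fun {i j} β => by ext x; rfl⟩

/-- `IsMonoIter L M N π` holds when `N`, together with the projection `π : N → M`,
is obtained from `M` by successively applying the `Mono` construction at the arrows in
the list `L` (the head of `L` applied last), each time using an injective envelope. -/
inductive IsMonoIter : ∀ (L : List (Σ i : V, Σ j : V, E i j)) (M N : QRep Λ E), Hom N M → Prop
  | nil (M : QRep Λ E) : IsMonoIter [] M M (Hom.id M)
  | cons {L : List (Σ i : V, Σ j : V, E i j)} {M N : QRep Λ E} {π : Hom N M} {v w : V}
      (α : E v w) {J : Type} [AddCommGroup J] [Module Λ J] (e : N.obj v →ₗ[Λ] J)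
      (henv : IsInjEnvelope e) (h : IsMonoIter L M N π) :
      IsMonoIter (⟨v, ⟨w, α⟩⟩ :: L) M (MonoA N α e) (π.comp (MonoAProj N α e))

/-- `π : G → M` is a right approximation of `M` in the category of
Gorenstein-projective (= separated monic) representations. -/
def IsRightApprox {G M : QRep Λ E} (π : Hom G M) : Prop :=
  SeparatedMonic G ∧
    ∀ G' : QRep Λ E, SeparatedMonic G' → ∀ f : Hom G' M, ∃ g : Hom G' G, π.comp g = f

/-- `π : A → M` is the minimal right approximation of `M` in Gproj. -/
def IsMimo {M A : QRep Λ E} (π : Hom A M) : Prop :=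
  IsRightApprox π ∧ ∀ φ : Hom A A, π.comp φ = π → ∀ i, Function.Bijective (φ.app i)

end QRep
end MonoACons
namespace QRep

variable {Λ : Type} [Ring Λ] {V : Type} {E : V → V → Type}

/-- The reflected quiver `Q(v)`: every arrow ending at `v` is reversed. An arrow
`i → j` of `Q(v)` is either an arrow `i → j` of `Q` with `j ≠ v`, or the reversal
of an arrow `j → v` of `Q` (in which case `i = v`). -/
def reflE (E : V → V → Type) (v : V) : V → V → Type :=
  fun i j => {a : E i j // j ≠ v} ⊕ (PLift (i = v) × E j v)

/-- The representation `X'(v)` of the reflected quiver: the branch at `v` is replaced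
by `Ω`, the structure maps at the reversed arrows being the components of `kmap`. -/
noncomputable def reflRep (X : QRep Λ E) (v : V) (hsink : ∀ j, IsEmpty (E v j))
    (Ω : Type) [AddCommGroup Ω] [Module Λ Ω]
    (kmap : Ω →ₗ[Λ] DirectSum (Σ j : V, E j v) (fun a => X.obj a.1)) :
    QRep Λ (reflE E v) where
  obj i := (PLift (i = v) → Ω) × (PLift (i ≠ v) → X.obj i)
  map {i j} a :=
    match a with
    | Sum.inl ⟨a, _⟩ => LinearMap.prod 0
        (LinearMap.pi fun _ : PLift (j ≠ v) =>
          (X.map a).comp ((LinearMap.proj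
            (⟨fun h => (hsink j).false (h ▸ a)⟩ : PLift (i ≠ v))).comp
              (LinearMap.snd Λ _ _)))
    | Sum.inr ⟨hiv, a⟩ => LinearMap.prod 0
        (LinearMap.pi fun _ : PLift (j ≠ v) =>
          (((DirectSum.component Λ (Σ j : V, E j v) (fun b => X.obj b.1) ⟨j, a⟩).comp
              kmap).comp ((LinearMap.proj hiv).comp (LinearMap.fst Λ _ _))))

/-- The reflection relation: `Z` is (the result of) the reflection `X(v)` of the
Gorenstein-projective representation `X` at the sink `v`; it is obtained from the
representation `X'(v)` (defined via a projective cover `δ : C → coker u_X` with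
kernel `Ω` and the lifted kernel map `kmap`) by the `Mono` construction at all
reversed arrows. -/
def IsReflectionAt (X : QRep Λ E) (v : V) (hsink : ∀ j, IsEmpty (E v j))
    (Z : QRep Λ (reflE E v)) : Prop :=
  ∃ (Xbar : Type) (_ : AddCommGroup Xbar) (_ : Module Λ Xbar) (πc : X.obj v →ₗ[Λ] Xbar)
    (C : Type) (_ : AddCommGroup C) (_ : Module Λ C) (δ : C →ₗ[Λ] Xbar)
    (kmap : ↥(LinearMap.ker δ) →ₗ[Λ] DirectSum (Σ j : V, E j v) (fun a => X.obj a.1))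
    (t : C →ₗ[Λ] X.obj v),
    Function.Surjective πc ∧ LinearMap.ker πc = LinearMap.range (X.uMap v) ∧
    Module.Projective Λ C ∧ Function.Surjective δ ∧
    (∀ W : Submodule Λ C, W ⊔ LinearMap.ker δ = ⊤ → W = ⊤) ∧
    πc.comp t = δ ∧ (X.uMap v).comp kmap = t.comp (LinearMap.ker δ).subtype ∧
    ∃ (L : List (Σ i : V, Σ j : V, reflE E v i j))
      (π : Hom Z (reflRep X v hsink (↥(LinearMap.ker δ)) kmap)),
      (∀ x ∈ L, x.1 = v) ∧ L.Nodup ∧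
      (∀ (j : V) (a : E j v),
        (⟨v, j, Sum.inr ⟨⟨rfl⟩, a⟩⟩ : Σ i : V, Σ j : V, reflE E v i j) ∈ L) ∧
      IsMonoIter L (reflRep X v hsink (↥(LinearMap.ker δ)) kmap) Z π

/-- Transport of a representation along a family of bijections of arrow types. -/
def transport {E' : V → V → Type} (σ : ∀ i j, E i j ≃ E' i j) (X : QRep Λ E) :
    QRep Λ E' where
  obj := X.obj
  map {i j} a := X.map ((σ i j).symm a)

/-- `A'` is a (representation-level) syzygy of `A` in the Frobenius category of
Gorenstein-projective representations. -/
def IsSyzRep (A' A : QRep Λ E) : Prop :=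
  ∃ (P : QRep Λ E) (ι : Hom A' P) (π : Hom P A), Projective P ∧ SeparatedMonic P ∧
    (∀ i, Function.Injective (ι.app i)) ∧ (∀ i, Function.Surjective (π.app i)) ∧
    (∀ i, LinearMap.range (ι.app i) = LinearMap.ker (π.app i))

/-- `C` is a double syzygy `Ω²(A)`. -/
def IsOmega2 (A C : QRep Λ E) : Prop :=
  ∃ A', IsSyzRep A' A ∧ IsSyzRep C A'

end QRep

open CategoryTheory

/-- The category of Gorenstein-projective (= separated monic) representations. -/
def GP (Λ : Type) [Ring Λ] {V : Type} (E : V → V → Type) : Type 1 :=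
  {X : QRep Λ E // QRep.SeparatedMonic X}

instance (Λ : Type) [Ring Λ] {V : Type} (E : V → V → Type) :
    Category (GP Λ E) where
  Hom X Y := QRep.Hom X.1 Y.1
  id X := QRep.Hom.id X.1
  comp f g := g.comp f
  id_comp f := by apply QRep.Hom.ext; funext i; exact LinearMap.comp_id _
  comp_id f := by apply QRep.Hom.ext; funext i; exact LinearMap.id_comp _
  assoc f g h := by apply QRep.Hom.ext; funext i; rfl

/-- The relation identifying two morphisms whose difference factors through a
projective object. -/
def stRel (Λ : Type) [Ring Λ] {V : Type} (E : V → V → Type) : HomRel (GP Λ E) :=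
  fun {X Y} f g => QRep.FactorsThroughProjective (f.sub g)

/-- The stable category of Gorenstein-projective representations modulo projectives. -/
def StableGP (Λ : Type) [Ring Λ] {V : Type} (E : V → V → Type) : Type 1 :=
  CategoryTheory.Quotient (stRel Λ E)

noncomputable instance (Λ : Type) [Ring Λ] {V : Type} (E : V → V → Type) :
    Category (StableGP Λ E) :=
  inferInstanceAs (Category (CategoryTheory.Quotient (stRel Λ E)))

section MainAux

variable {Λ : Type} [Ring Λ] {V : Type} {E : V → V → Type}

open QRep

lemma and_cases_eq {p q : Prop} {γ : Sort _} (h : p ∧ q) (f : p → q → γ) (hp : p) (hq : q) :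
    And.casesOn h f = f hp hq := by cases h; rfl

lemma and_rec_eq {p q : Prop} {γ : Sort _} (f : p → q → γ) (h : p ∧ q) (hp : p) (hq : q) :
    And.rec f h = f hp hq := by cases h; rfl

lemma emap_self (M : QRep Λ E) {v w : V} (α : E v w) {J : Type} [AddCommGroup J]
    [Module Λ J] (e : M.obj v →ₗ[Λ] J) :
    EMap M α e α = (Finsupp.lsingle (R := Λ) (M := J) (@Quiver.Path.nil V ⟨E⟩ w)).comp e := by
  rw [EMap, dif_pos rfl, and_cases_eq _ _ rfl HEq.rfl]
  conv_lhs => whnf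
  rw [and_rec_eq _ _ rfl HEq.rfl]

lemma emap_ne (M : QRep Λ E) {v w : V} (α : E v w) {J : Type} [AddCommGroup J]
    [Module Λ J] (e : M.obj v →ₗ[Λ] J) {i j : V} (β : E i j)
    (h : (⟨i, ⟨j, β⟩⟩ : Σ a : V, Σ b : V, E a b) ≠ ⟨v, ⟨w, α⟩⟩) :
    EMap M α e β = 0 := by
  rw [EMap, dif_neg h]

lemma monoA_map_apply (M : QRep Λ E) {v w : V} (α : E v w) {J : Type} [AddCommGroup J]
    [Module Λ J] (e : M.obj v →ₗ[Λ] J) {i j : V} (β : E i j) (x : M.obj i)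
    (y : Path E w i →₀ J) :
    (MonoA M α e).map β (x, y) =
      (M.map β x, (Finsupp.mapDomain (fun p => @Quiver.Path.cons V ⟨E⟩ w i j p β) y :
          Path E w j →₀ J)
        + EMap M α e β x) := by
  rfl

lemma cons_inj {v w : V} (α : E v w) :
    Function.Injective (fun p : Path E w v => @Quiver.Path.cons V ⟨E⟩ w v w p α) := by
  letI : Quiver V := ⟨E⟩
  intro p q h
  exact eq_of_heq (Quiver.Path.heq_of_cons_eq_cons h)

lemma nil_notin_cons_range {i w : V} (β : E i w) :
    (@Quiver.Path.nil V ⟨E⟩ w : Path E w w) ∉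
      Set.range (fun p : Path E w i => @Quiver.Path.cons V ⟨E⟩ w i w p β) := by
  letI : Quiver V := ⟨E⟩
  rintro ⟨p, hp⟩
  exact Quiver.Path.cons_ne_nil p β hp

end MainAux
/-- For a `ΛQ`-module `M` and an arrow `α : v → w`, the module
`N = Mono_α(M)` (built from an injective envelope `e : M_v → J` as the middle term
of the componentwise split sequence `0 → P_w(J) → N → M → 0`) has `N_α` monic, and
the image of `N_α` forms a direct sum with the sum of the images of the other
structure maps ending at `w`. -/
theorem monoA_map_injective_and_disjoint
    (k : Type) [Field k] (Λ : Type) [Ring Λ] [Algebra k Λ] [FiniteDimensional k Λ]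
    (hself : Module.Injective Λ Λ)
    {V : Type} [Fintype V] {E : V → V → Type} [∀ i j, Fintype (E i j)]
    (hacyc : QRep.Acyclic E)
    (M : QRep Λ E) (hfin : ∀ i, Module.Finite Λ (M.obj i))
    {v w : V} (α : E v w)
    (J : Type) [AddCommGroup J] [Module Λ J] (e : M.obj v →ₗ[Λ] J)
    (he : QRep.IsInjEnvelope e) :
    Function.Injective ((QRep.MonoA M α e).map α) ∧
    Disjoint (LinearMap.range ((QRep.MonoA M α e).map α))
      (⨆ b : {b : Σ j : V, E j w // b ≠ ⟨v, α⟩},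
        LinearMap.range ((QRep.MonoA M α e).map b.1.2)) := by
  classical
  letI : Quiver V := ⟨E⟩
  obtain ⟨-, heinj, -⟩ := he
  -- key computation of the map at `α`
  have hα : ∀ (x : M.obj v) (y : QRep.Path E w v →₀ J),
      (QRep.MonoA M α e).map α (x, y) =
        (M.map α x, Finsupp.mapDomain (fun p => @Quiver.Path.cons V ⟨E⟩ w v w p α) y
          + Finsupp.single (@Quiver.Path.nil V ⟨E⟩ w) (e x)) := by
    intro x y
    rw [monoA_map_apply, emap_self]
    rfl
  -- if the image under map α is zero then x = 0 and y = 0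
  have hzero : ∀ (x : M.obj v) (y : QRep.Path E w v →₀ J),
      (Finsupp.mapDomain (fun p => @Quiver.Path.cons V ⟨E⟩ w v w p α) y
          + Finsupp.single (@Quiver.Path.nil V ⟨E⟩ w) (e x)) (@Quiver.Path.nil V ⟨E⟩ w) = 0 →
      (∀ p : QRep.Path E w v,
        (Finsupp.mapDomain (fun q => @Quiver.Path.cons V ⟨E⟩ w v w q α) y
          + Finsupp.single (@Quiver.Path.nil V ⟨E⟩ w) (e x))
            (@Quiver.Path.cons V ⟨E⟩ w v w p α) = 0) →
      x = 0 ∧ y = 0 := by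
    intro x y hnil hcons
    have hmd : (Finsupp.mapDomain (fun p => @Quiver.Path.cons V ⟨E⟩ w v w p α) y)
        (@Quiver.Path.nil V ⟨E⟩ w) = 0 :=
      Finsupp.mapDomain_notin_range _ _ (nil_notin_cons_range α)
    have hma : ∀ q : QRep.Path E w v,
        (Finsupp.mapDomain (fun p => @Quiver.Path.cons V ⟨E⟩ w v w p α) y)
          (@Quiver.Path.cons V ⟨E⟩ w v w q α) = y q :=
      fun q => Finsupp.mapDomain_apply (cons_inj α) y q
    have hx : x = 0 := by
      apply heinj
      rw [map_zero]
      simpa only [Finsupp.add_apply, hmd, Finsupp.single_eq_same, zero_add] using hnil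
    refine ⟨hx, ?_⟩
    ext p
    have hp := hcons p
    simp only [Finsupp.add_apply, hma,
      Finsupp.single_eq_of_ne (Quiver.Path.nil_ne_cons p α), add_zero] at hp
    simpa using hp
  constructor
  · rw [injective_iff_map_eq_zero]
    rintro ⟨x, y⟩ hz
    rw [hα x y] at hz
    have hz : _ ∧ _ := Prod.mk_eq_zero.mp hz
    have h2 := hz.2
    obtain ⟨hx, hy⟩ := hzero x y (by rw [h2]; rfl) (fun p => by rw [h2]; rfl)
    rw [hx, hy]
    rfl
  · -- the submodule of elements vanishing at nil and at all paths ending with α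
    set S : Submodule Λ ((QRep.MonoA M α e).obj w) :=
      (LinearMap.ker ((Finsupp.lapply (M := J) (R := Λ) (@Quiver.Path.nil V ⟨E⟩ w)).comp
          (LinearMap.snd Λ (M.obj w) (QRep.Path E w w →₀ J)))) ⊓
      (⨅ p : QRep.Path E w v,
        LinearMap.ker ((Finsupp.lapply (M := J) (R := Λ)
            (@Quiver.Path.cons V ⟨E⟩ w v w p α)).comp
          (LinearMap.snd Λ (M.obj w) (QRep.Path E w w →₀ J)))) with hS
    have hsup : (⨆ b : {b : Σ j : V, E j w // b ≠ ⟨v, α⟩},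
        LinearMap.range ((QRep.MonoA M α e).map b.1.2)) ≤ S := by
      apply iSup_le
      rintro ⟨⟨j, β⟩, hb⟩
      rintro z ⟨⟨m, f⟩, rfl⟩
      have hne : (⟨j, ⟨w, β⟩⟩ : Σ a : V, Σ b : V, E a b) ≠ ⟨v, ⟨w, α⟩⟩ := by
        intro hEq
        obtain ⟨h1, h2⟩ := Sigma.mk.inj_iff.mp hEq
        subst h1
        obtain ⟨-, h4⟩ := Sigma.mk.inj_iff.mp (eq_of_heq h2)
        exact hb (by rw [eq_of_heq h4])
      have happ : (QRep.MonoA M α e).map β (m, f) =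
          (M.map β m, Finsupp.mapDomain (fun p => @Quiver.Path.cons V ⟨E⟩ w j w p β) f) := by
        rw [monoA_map_apply, emap_ne M α e β hne]
        simp
        rfl
      rw [hS]
      refine Submodule.mem_inf.mpr ⟨?_, ?_⟩
      · show (((QRep.MonoA M α e).map β) (m, f)).2 (@Quiver.Path.nil V ⟨E⟩ w) = 0
        rw [happ]
        exact Finsupp.mapDomain_notin_range _ _ (nil_notin_cons_range β)
      · refine (Submodule.mem_iInf _).mpr fun p => ?_
        show (((QRep.MonoA M α e).map β) (m, f)).2 (@Quiver.Path.cons V ⟨E⟩ w v w p α) = 0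
        rw [happ]
        refine Finsupp.mapDomain_notin_range _ _ ?_
        rintro ⟨q, hq⟩
        have h1 : j = v := Quiver.Path.obj_eq_of_cons_eq_cons hq
        subst h1
        have h2 : β = α := eq_of_heq (Quiver.Path.hom_heq_of_cons_eq_cons hq)
        exact hb (by rw [h2])
    rw [Submodule.disjoint_def]
    rintro z ⟨⟨x, y⟩, rfl⟩ hz2
    have hzS := hsup hz2
    rw [hα x y, hS] at hzS
    obtain ⟨h1, h2⟩ := Submodule.mem_inf.mp hzS
    have h1' : (Finsupp.mapDomain (fun p => @Quiver.Path.cons V ⟨E⟩ w v w p α) y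
        + Finsupp.single (@Quiver.Path.nil V ⟨E⟩ w) (e x)) (@Quiver.Path.nil V ⟨E⟩ w) = 0 := h1
    have h2' : ∀ p : QRep.Path E w v,
        (Finsupp.mapDomain (fun q => @Quiver.Path.cons V ⟨E⟩ w v w q α) y
          + Finsupp.single (@Quiver.Path.nil V ⟨E⟩ w) (e x))
            (@Quiver.Path.cons V ⟨E⟩ w v w p α) = 0 :=
      fun p => (Submodule.mem_iInf _).mp h2 p
    obtain ⟨hx, hy⟩ := hzero x y h1' h2'
    rw [hα x y, hx, hy]
    simp
    exact Prod.ext rfl (Finsupp.mapDomain_zero (M := J)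
      (f := fun p : QRep.Path E w v => @Quiver.Path.cons V ⟨E⟩ w v w p α))
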